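/- In the algorithmic setting described in the context, assuming additionally that f is twice continuously differentiable, the sequences {X^k} and {Y^k} are bounded, and there exists a constant C₁ > 0 such that σ₁((X^k + Y^k)/2 − ∇f(Y^k)/(2β)) ≤ C₁ for all k ∈ ℕ (i.e. the largest singular value of (X^k + Y^k)/2 − ∇f(Y^k)/(2β) is uniformly bounded). -/

import Mathlib

open Filter Topology Matrix

/-- The singular values of a real `m × n` matrix (`m ≤ n`), in nonincreasing order:
`sval X i` is the `(i+1)`-th largest singular value of `X`. -/
noncomputable def sval {m n : ℕ} (X : Matrix (Fin m) (Fin n) ℝ) : Fin m → ℝ :=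
  fun i =>
    let ev : Fin m → ℝ := (Matrix.isHermitian_mul_conjTranspose_self X).eigenvalues
    Real.sqrt (ev (Tuple.sort ev i.rev))

/-- The `m × n` matrix with the vector `d` on its main diagonal and zeros elsewhere. -/
def rdiag {m n : ℕ} (d : Fin m → ℝ) : Matrix (Fin m) (Fin n) ℝ :=
  Matrix.of fun i j => if (j : ℕ) = (i : ℕ) then d i else 0

/-- The Frobenius norm of a matrix. -/
noncomputable def frobNorm {m n : ℕ} (X : Matrix (Fin m) (Fin n) ℝ) : ℝ :=
  Real.sqrt (∑ i, ∑ j, (X i j) ^ 2)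

/-- The Frobenius (trace) inner product of two matrices. -/
def finner {m n : ℕ} (A B : Matrix (Fin m) (Fin n) ℝ) : ℝ :=
  ∑ i, ∑ j, A i j * B i j

/-- `G` is the (Fréchet) gradient of `f : ℝ^{m×n} → ℝ` at `X`, with respect to the
Frobenius inner product. -/
def HasFrobGradientAt {m n : ℕ} (f : Matrix (Fin m) (Fin n) ℝ → ℝ)
    (G X : Matrix (Fin m) (Fin n) ℝ) : Prop :=
  Filter.Tendsto
    (fun H : Matrix (Fin m) (Fin n) ℝ => |f (X + H) - f X - finner G H| / frobNorm H)
    (nhdsWithin 0 {0}ᶜ) (nhds 0)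

attribute [local instance] Matrix.frobeniusNormedAddCommGroup Matrix.frobeniusNormedSpace

namespace StmtAux4

variable {m n : ℕ}

lemma frobNorm_eq (X : Matrix (Fin m) (Fin n) ℝ) : frobNorm X = ‖X‖ := by
  rw [frobNorm, Matrix.frobenius_norm_def, Real.sqrt_eq_rpow]
  congr 1
  refine Finset.sum_congr rfl fun i _ => Finset.sum_congr rfl fun j _ => ?_
  rw [Real.rpow_two, Real.norm_eq_abs, sq_abs]

lemma frobNorm_nonneg (X : Matrix (Fin m) (Fin n) ℝ) : 0 ≤ frobNorm X :=
  Real.sqrt_nonneg _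

lemma finner_comm (A B : Matrix (Fin m) (Fin n) ℝ) : finner A B = finner B A := by
  unfold finner; exact Finset.sum_congr rfl fun i _ => Finset.sum_congr rfl fun j _ => mul_comm _ _

lemma finner_add_right (A B C : Matrix (Fin m) (Fin n) ℝ) :
    finner A (B + C) = finner A B + finner A C := by
  unfold finner; simp [Matrix.add_apply, mul_add, Finset.sum_add_distrib]

lemma finner_sub_right (A B C : Matrix (Fin m) (Fin n) ℝ) :
    finner A (B - C) = finner A B - finner A C := by
  unfold finner; simp [Matrix.sub_apply, mul_sub, Finset.sum_sub_distrib]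

lemma finner_smul_right (A B : Matrix (Fin m) (Fin n) ℝ) (c : ℝ) :
    finner A (c • B) = c * finner A B := by
  unfold finner
  simp [Matrix.smul_apply, Finset.mul_sum]
  congr 1; ext i; congr 1; ext j; ring

lemma abs_finner_le (A B : Matrix (Fin m) (Fin n) ℝ) : |finner A B| ≤ ‖A‖ * ‖B‖ := by
  have h1 : |finner A B| ^ 2 ≤ (∑ i, ∑ j, (A i j)^2) * (∑ i, ∑ j, (B i j)^2) := by
    rw [sq_abs]
    have := Finset.sum_mul_sq_le_sq_mul_sq Finset.univ
      (fun q : Fin m × Fin n => A q.1 q.2) (fun q : Fin m × Fin n => B q.1 q.2)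
    simpa [Fintype.sum_prod_type, finner] using this
  have hA : ‖A‖ = Real.sqrt (∑ i, ∑ j, (A i j)^2) := (frobNorm_eq A) ▸ rfl
  have hB : ‖B‖ = Real.sqrt (∑ i, ∑ j, (B i j)^2) := (frobNorm_eq B) ▸ rfl
  have hAn : (0:ℝ) ≤ ∑ i, ∑ j, (A i j)^2 := by positivity
  rw [hA, hB, ← Real.sqrt_mul hAn]
  rw [show |finner A B| = Real.sqrt (|finner A B|^2) by rw [Real.sqrt_sq (abs_nonneg _)]]
  exact Real.sqrt_le_sqrt h1

/-- `finner G ·` as a continuous linear map. -/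
noncomputable def finCLM (G : Matrix (Fin m) (Fin n) ℝ) : Matrix (Fin m) (Fin n) ℝ →L[ℝ] ℝ :=
  LinearMap.mkContinuous
    { toFun := fun H => finner G H
      map_add' := fun a b => finner_add_right G a b
      map_smul' := fun c a => by simpa using finner_smul_right G a c } ‖G‖
    (fun H => by
      rw [Real.norm_eq_abs]
      exact abs_finner_le G H)

@[simp] lemma finCLM_apply (G H : Matrix (Fin m) (Fin n) ℝ) : finCLM G H = finner G H := rfl

lemma hasFDerivAt_of_grad {f : Matrix (Fin m) (Fin n) ℝ → ℝ} {G X : Matrix (Fin m) (Fin n) ℝ}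
    (h : HasFrobGradientAt f G X) : HasFDerivAt f (finCLM G) X := by
  apply hasFDerivAt_iff_tendsto.mpr
  have h0 : Tendsto (fun H : Matrix (Fin m) (Fin n) ℝ =>
      |f (X + H) - f X - finner G H| / frobNorm H) (nhds 0) (nhds 0) := by
    rw [← nhdsNE_sup_pure (0 : Matrix (Fin m) (Fin n) ℝ)]
    rw [tendsto_sup]
    refine ⟨h, ?_⟩
    rw [tendsto_pure_left]
    intro s hs
    have h00 : |f (X + (0 : Matrix (Fin m) (Fin n) ℝ)) - f X - finner G 0|
        / frobNorm (0 : Matrix (Fin m) (Fin n) ℝ) = 0 := by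
      simp [finner, frobNorm]
    exact h00 ▸ mem_of_mem_nhds hs
  have hsub : Tendsto (fun x' : Matrix (Fin m) (Fin n) ℝ => x' - X) (nhds X) (nhds 0) := by
    have hc : Continuous fun x' : Matrix (Fin m) (Fin n) ℝ => x' - X :=
      continuous_id.sub continuous_const
    simpa using hc.tendsto X
  have := h0.comp hsub
  refine this.congr fun x' => ?_
  simp only [Function.comp_apply]
  rw [frobNorm_eq]
  rw [show X + (x' - X) = x' by abel]
  rw [div_eq_inv_mul, Real.norm_eq_abs]
  rfl

lemma descent_core {Lf : ℝ} (hLf : 0 ≤ Lf) {f : Matrix (Fin m) (Fin n) ℝ → ℝ}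
    {Gf : Matrix (Fin m) (Fin n) ℝ → Matrix (Fin m) (Fin n) ℝ}
    (hgrad : ∀ Z, HasFrobGradientAt f (Gf Z) Z)
    (hlip : ∀ Z W, frobNorm (Gf Z - Gf W) ≤ Lf * frobNorm (Z - W))
    (A B : Matrix (Fin m) (Fin n) ℝ) :
    f B ≤ f A + finner (Gf A) (B - A) + Lf / 2 * frobNorm (B - A) ^ 2 ∧
      f A + finner (Gf A) (B - A) - Lf / 2 * frobNorm (B - A) ^ 2 ≤ f B := by
  set Δ := B - A with hΔ
  have hg : ∀ t : ℝ, HasDerivAt (fun t : ℝ => f (A + t • Δ)) (finner (Gf (A + t • Δ)) Δ) t := by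
    intro t
    have h1 : HasFDerivAt f (finCLM (Gf (A + t • Δ))) (A + t • Δ) :=
      hasFDerivAt_of_grad (hgrad _)
    have h2 : HasDerivAt (fun t : ℝ => A + t • Δ) Δ t := by
      have h := ((hasDerivAt_id t).smul_const Δ).const_add A
      rw [one_smul] at h
      exact h
    exact h1.comp_hasDerivAt t h2
  have hlipc : LipschitzWith (Real.toNNReal Lf) Gf := by
    refine LipschitzWith.of_dist_le_mul fun Z W => ?_
    rw [dist_eq_norm, dist_eq_norm, ← frobNorm_eq, ← frobNorm_eq]
    simpa [Real.coe_toNNReal _ hLf] using hlip Z W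
  have hcont : Continuous fun t : ℝ => finner (Gf (A + t • Δ)) Δ := by
    have c1 : Continuous fun t : ℝ => Gf (A + t • Δ) :=
      hlipc.continuous.comp (by continuity)
    have c2 : Continuous fun M : Matrix (Fin m) (Fin n) ℝ => finner M Δ := by
      unfold finner
      exact continuous_finset_sum _ fun i _ => continuous_finset_sum _ fun j _ =>
        ((continuous_apply_apply i j).mul continuous_const)
    exact c2.comp c1
  have key : f B - f A = ∫ t in (0:ℝ)..1, finner (Gf (A + t • Δ)) Δ := by
    rw [intervalIntegral.integral_eq_sub_of_hasDerivAt (fun t _ => hg t)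
      (hcont.intervalIntegrable 0 1)]
    simp [hΔ]
  have hptwise : ∀ t ∈ Set.Icc (0:ℝ) 1,
      |finner (Gf (A + t • Δ)) Δ - finner (Gf A) Δ| ≤ (Lf * ‖Δ‖ ^ 2) * t := by
    intro t ht
    have h1 : finner (Gf (A + t • Δ)) Δ - finner (Gf A) Δ
        = finner (Gf (A + t • Δ) - Gf A) Δ := by
      rw [finner_comm (Gf (A + t • Δ)) Δ, finner_comm (Gf A) Δ,
        finner_comm (Gf (A + t • Δ) - Gf A) Δ,
        finner_sub_right Δ (Gf (A + t • Δ)) (Gf A)]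
    have h2 : |finner (Gf (A + t • Δ) - Gf A) Δ| ≤ ‖Gf (A + t • Δ) - Gf A‖ * ‖Δ‖ :=
      abs_finner_le _ _
    have h3 : ‖Gf (A + t • Δ) - Gf A‖ ≤ Lf * (t * ‖Δ‖) := by
      have hl := hlip (A + t • Δ) A
      rw [frobNorm_eq, frobNorm_eq] at hl
      have he : A + t • Δ - A = t • Δ := by abel
      rw [he, norm_smul, Real.norm_eq_abs, abs_of_nonneg ht.1] at hl
      exact hl
    rw [h1]
    refine h2.trans ?_
    have hΔn : (0:ℝ) ≤ ‖Δ‖ := norm_nonneg _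
    nlinarith [h3]
  have hup : ∀ t ∈ Set.Icc (0:ℝ) 1,
      finner (Gf (A + t • Δ)) Δ ≤ finner (Gf A) Δ + (Lf * ‖Δ‖ ^ 2) * t := by
    intro t ht
    have := (abs_le.mp (hptwise t ht)).2
    linarith
  have hlo : ∀ t ∈ Set.Icc (0:ℝ) 1,
      finner (Gf A) Δ - (Lf * ‖Δ‖ ^ 2) * t ≤ finner (Gf (A + t • Δ)) Δ := by
    intro t ht
    have := (abs_le.mp (hptwise t ht)).1
    linarith
  have hintu : (∫ t in (0:ℝ)..1, (finner (Gf A) Δ + (Lf * ‖Δ‖ ^ 2) * t))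
      = finner (Gf A) Δ + Lf * ‖Δ‖ ^ 2 / 2 := by
    rw [intervalIntegral.integral_add intervalIntegrable_const
      (intervalIntegral.intervalIntegrable_id.const_mul _), intervalIntegral.integral_const,
      intervalIntegral.integral_const_mul, integral_id]
    norm_num
    ring
  have hintl : (∫ t in (0:ℝ)..1, (finner (Gf A) Δ - (Lf * ‖Δ‖ ^ 2) * t))
      = finner (Gf A) Δ - Lf * ‖Δ‖ ^ 2 / 2 := by
    rw [intervalIntegral.integral_sub intervalIntegrable_const
      (intervalIntegral.intervalIntegrable_id.const_mul _), intervalIntegral.integral_const,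
      intervalIntegral.integral_const_mul, integral_id]
    norm_num
    ring
  have hmono1 : (∫ t in (0:ℝ)..1, finner (Gf (A + t • Δ)) Δ)
      ≤ ∫ t in (0:ℝ)..1, (finner (Gf A) Δ + (Lf * ‖Δ‖ ^ 2) * t) := by
    refine intervalIntegral.integral_mono_on (by norm_num)
      (hcont.intervalIntegrable 0 1)
      ((continuous_const.add (continuous_const.mul continuous_id)).intervalIntegrable 0 1)
      hup
  have hmono2 : (∫ t in (0:ℝ)..1, (finner (Gf A) Δ - (Lf * ‖Δ‖ ^ 2) * t))
      ≤ ∫ t in (0:ℝ)..1, finner (Gf (A + t • Δ)) Δ := by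
    refine intervalIntegral.integral_mono_on (by norm_num)
      ((continuous_const.sub (continuous_const.mul continuous_id)).intervalIntegrable 0 1)
      (hcont.intervalIntegrable 0 1)
      hlo
  rw [hintu] at hmono1
  rw [hintl] at hmono2
  constructor
  · rw [frobNorm_eq]
    linarith [key ▸ hmono1]
  · rw [frobNorm_eq]
    linarith [key ▸ hmono2]

lemma sum_eigenvalues_eq_trace {N : ℕ} {A : Matrix (Fin N) (Fin N) ℝ}
    (hA : A.IsHermitian) : ∑ i, hA.eigenvalues i = A.trace := by
  conv_rhs => rw [hA.spectral_theorem]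
  rw [Unitary.conjStarAlgAut_apply, Matrix.trace_mul_cycle]
  rw [show (star (hA.eigenvectorUnitary : Matrix (Fin N) (Fin N) ℝ))
      * (hA.eigenvectorUnitary : Matrix (Fin N) (Fin N) ℝ) = 1 from
    Unitary.coe_star_mul_self hA.eigenvectorUnitary]
  rw [one_mul, Matrix.trace_diagonal]
  simp

lemma sval_nonneg (X : Matrix (Fin m) (Fin n) ℝ) (i : Fin m) : 0 ≤ sval X i :=
  Real.sqrt_nonneg _

lemma sval_le_frobNorm (X : Matrix (Fin m) (Fin n) ℝ) (i : Fin m) :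
    sval X i ≤ frobNorm X := by
  set hA := Matrix.isHermitian_mul_conjTranspose_self X with hAdef
  set ev : Fin m → ℝ := hA.eigenvalues with hev
  have hnn : ∀ j, 0 ≤ ev j := fun j =>
    Matrix.eigenvalues_self_mul_conjTranspose_nonneg X j
  have htr : (X * Xᴴ).trace = ∑ a, ∑ b, (X a b) ^ 2 := by
    simp [Matrix.trace, Matrix.diag, Matrix.mul_apply, Matrix.conjTranspose_apply, sq]
  have hsum : ∑ j, ev j = ∑ a, ∑ b, (X a b) ^ 2 := by
    rw [hev, sum_eigenvalues_eq_trace hA, htr]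
  have hle : ev (Tuple.sort ev i.rev) ≤ ∑ a, ∑ b, (X a b) ^ 2 := by
    rw [← hsum]
    exact Finset.single_le_sum (fun j _ => hnn j) (Finset.mem_univ _)
  calc sval X i = Real.sqrt (ev (Tuple.sort ev i.rev)) := rfl
    _ ≤ Real.sqrt (∑ a, ∑ b, (X a b) ^ 2) := Real.sqrt_le_sqrt hle
    _ = frobNorm X := rfl

lemma rpow_tangent {p a b : ℝ} (hp0 : 0 < p) (hp1 : p < 1) (ha : 0 ≤ a) (hb : 0 < b) :
    a ^ p ≤ b ^ p + p * b ^ (p - 1) * (a - b) := by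
  have hs : (-1 : ℝ) ≤ a / b - 1 := by
    have : 0 ≤ a / b := div_nonneg ha hb.le
    linarith
  have hber := rpow_one_add_le_one_add_mul_self hs hp0.le hp1.le
  have h1 : (1 : ℝ) + (a / b - 1) = a / b := by ring
  rw [h1] at hber
  have hdiv : (a / b) ^ p = a ^ p / b ^ p := Real.div_rpow ha hb.le p
  rw [hdiv] at hber
  have hbp : (0:ℝ) < b ^ p := Real.rpow_pos_of_pos hb p
  have hmul := mul_le_mul_of_nonneg_right hber hbp.le
  rw [div_mul_cancel₀ _ hbp.ne'] at hmul
  calc a ^ p ≤ (1 + p * (a / b - 1)) * b ^ p := hmul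
    _ = b ^ p + p * (b ^ p / b) * (a - b) := by
        field_simp
    _ = b ^ p + p * b ^ (p - 1) * (a - b) := by
        rw [← Real.rpow_sub_one hb.ne' p]

end StmtAux4

open StmtAux4 in
/-- Boundedness of the iterates: if in addition `f` is twice continuously
differentiable, the sequences `{X^k}` and `{Y^k}` are bounded, and the largest singular
value of `(X^k + Y^k)/2 − ∇f(Y^k)/(2β)` is uniformly bounded by some constant `C₁ > 0`.
(Here `X^{−1} = X^0`, realized by truncated subtraction.) -/
theorem stmt_4 {m n : ℕ} (hm : 0 < m) (hmn : m ≤ n) (p lam Lf β alphabar : ℝ)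
    (hp0 : 0 < p) (hp1 : p < 1) (hlam : 0 < lam)
    (hLf : 0 ≤ Lf) (hβ : Lf < β)
    (hab0 : 0 < alphabar) (hab1 : alphabar < Real.sqrt (β / (3 * Lf + β)))
    (f : Matrix (Fin m) (Fin n) ℝ → ℝ)
    (Gf : Matrix (Fin m) (Fin n) ℝ → Matrix (Fin m) (Fin n) ℝ)
    (hgrad : ∀ Z, HasFrobGradientAt f (Gf Z) Z)
    (hlip : ∀ Z W, frobNorm (Gf Z - Gf W) ≤ Lf * frobNorm (Z - W))
    (hlevel : ∀ cc : ℝ, ∃ R : ℝ, ∀ Z : Matrix (Fin m) (Fin n) ℝ,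
      f Z + lam * (∑ i, sval Z i ^ p) ≤ cc → frobNorm Z ≤ R)
    (X Y : ℕ → Matrix (Fin m) (Fin n) ℝ) (ε : ℕ → Fin m → ℝ)
    (hε : ∀ k i, 0 < ε k i) (hεmono : ∀ k i, ε (k + 1) i ≤ ε k i)
    (α : ℕ → ℝ) (hα : ∀ k, α k ∈ Set.Icc 0 alphabar)
    (hY : ∀ k, Y k = X k + α k • (X k - X (k - 1)))
    (hmin : ∀ k, ∀ Z : Matrix (Fin m) (Fin n) ℝ,
      f (Y k) + finner (X (k + 1)) (Gf (Y k))
          + β / 2 * frobNorm (X (k + 1) - Y k) ^ 2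
          + β / 2 * frobNorm (X (k + 1) - X k) ^ 2
          + lam * ∑ i, (p * (sval (X k) i + ε k i) ^ (p - 1)) * sval (X (k + 1)) i
        ≤ f (Y k) + finner Z (Gf (Y k))
          + β / 2 * frobNorm (Z - Y k) ^ 2
          + β / 2 * frobNorm (Z - X k) ^ 2
          + lam * ∑ i, (p * (sval (X k) i + ε k i) ^ (p - 1)) * sval Z i) :
    (hC2 : ContDiff ℝ 2 f) →
    (∃ R : ℝ, ∀ k : ℕ, frobNorm (X k) ≤ R ∧ frobNorm (Y k) ≤ R) ∧
    ∃ C₁ : ℝ, 0 < C₁ ∧ ∀ k : ℕ,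
      sval ((1 / 2 : ℝ) • (X k + Y k) - (1 / (2 * β)) • Gf (Y k)) ⟨0, hm⟩ ≤ C₁ := by
  intro _hC2
  have hβ0 : 0 < β := lt_of_le_of_lt hLf hβ
  -- the coefficient inequality coming from the extrapolation bound
  have hcoefkey : (β + Lf) * alphabar ^ 2 ≤ β := by
    have hd0 : (0:ℝ) < 3 * Lf + β := by linarith
    have hr0 : (0:ℝ) ≤ β / (3 * Lf + β) := by positivity
    have hsq : alphabar ^ 2 < β / (3 * Lf + β) := by
      have h1 : alphabar ^ 2 < Real.sqrt (β / (3 * Lf + β)) ^ 2 := by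
        have := Real.sqrt_nonneg (β / (3 * Lf + β))
        nlinarith [hab1, hab0]
      rwa [Real.sq_sqrt hr0] at h1
    have h2 : alphabar ^ 2 * (3 * Lf + β) < β := (lt_div_iff₀ hd0).mp hsq
    nlinarith [sq_nonneg alphabar, mul_nonneg (sq_nonneg alphabar) hLf]
  -- one-step decrease of the Lyapunov function
  have hdec : ∀ k : ℕ,
      f (X (k+1)) + lam * (∑ i, (sval (X (k+1)) i + ε (k+1) i) ^ p)
          + β / 2 * frobNorm (X (k+1) - X k) ^ 2
        ≤ f (X k) + lam * (∑ i, (sval (X k) i + ε k i) ^ p)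
          + β / 2 * frobNorm (X k - X (k-1)) ^ 2 := by
    intro k
    have hr : frobNorm (X k - Y k) = α k * frobNorm (X k - X (k-1)) := by
      have hXY : X k - Y k = -(α k • (X k - X (k-1))) := by
        rw [hY k]; abel
      rw [frobNorm_eq, hXY, norm_neg, norm_smul, Real.norm_eq_abs,
        abs_of_nonneg (hα k).1, ← frobNorm_eq]
    have hmk := hmin k (X k)
    rw [sub_self, hr] at hmk
    have hf0 : frobNorm (0 : Matrix (Fin m) (Fin n) ℝ) = 0 := by simp [frobNorm]
    rw [hf0] at hmk
    have e1 : finner (Gf (Y k)) (X (k+1) - Y k)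
        = finner (X (k+1)) (Gf (Y k)) - finner (Y k) (Gf (Y k)) := by
      rw [finner_sub_right, finner_comm (Gf (Y k)) (X (k+1)), finner_comm (Gf (Y k)) (Y k)]
    have e2 : finner (Gf (Y k)) (X k - Y k)
        = finner (X k) (Gf (Y k)) - finner (Y k) (Gf (Y k)) := by
      rw [finner_sub_right, finner_comm (Gf (Y k)) (X k), finner_comm (Gf (Y k)) (Y k)]
    have desc1 := (descent_core hLf hgrad hlip (Y k) (X (k+1))).1
    rw [e1] at desc1
    have desc2 := (descent_core hLf hgrad hlip (Y k) (X k)).2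
    rw [e2, hr] at desc2
    -- concavity (tangent line) estimate for the weighted singular-value sums
    have hsumtan : (∑ i, (sval (X (k+1)) i + ε (k+1) i) ^ p)
        ≤ (∑ i, (sval (X k) i + ε k i) ^ p)
          + ((∑ i, (p * (sval (X k) i + ε k i) ^ (p - 1)) * sval (X (k+1)) i)
            - ∑ i, (p * (sval (X k) i + ε k i) ^ (p - 1)) * sval (X k) i) := by
      have hterm : ∀ i : Fin m, (sval (X (k+1)) i + ε (k+1) i) ^ p
          ≤ (sval (X k) i + ε k i) ^ p
            + ((p * (sval (X k) i + ε k i) ^ (p - 1)) * sval (X (k+1)) i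
              - (p * (sval (X k) i + ε k i) ^ (p - 1)) * sval (X k) i) := by
        intro i
        have hb : 0 < sval (X k) i + ε k i := by
          have := sval_nonneg (X k) i; have := hε k i; linarith
        have ha : (0:ℝ) ≤ sval (X (k+1)) i + ε k i := by
          have := sval_nonneg (X (k+1)) i; have := hε k i; linarith
        have h1 : (sval (X (k+1)) i + ε (k+1) i) ^ p ≤ (sval (X (k+1)) i + ε k i) ^ p := by
          refine Real.rpow_le_rpow ?_ ?_ hp0.le
          · have := sval_nonneg (X (k+1)) i; have := hε (k+1) i; linarith
          · have := hεmono k i; linarith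
        have h2 := rpow_tangent hp0 hp1 ha hb
        nlinarith [h1, h2]
      calc (∑ i, (sval (X (k+1)) i + ε (k+1) i) ^ p)
          ≤ ∑ i, ((sval (X k) i + ε k i) ^ p
            + ((p * (sval (X k) i + ε k i) ^ (p - 1)) * sval (X (k+1)) i
              - (p * (sval (X k) i + ε k i) ^ (p - 1)) * sval (X k) i)) :=
            Finset.sum_le_sum fun i _ => hterm i
        _ = _ := by rw [Finset.sum_add_distrib, Finset.sum_sub_distrib]
    have hP := mul_le_mul_of_nonneg_left hsumtan hlam.le
    rw [mul_add, mul_sub] at hP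
    -- abstract the large subterms so that the final linear arithmetic is fast
    set A3 := f (Y k) with hA3
    set A1 := f (X (k+1)) with hA1
    set A2 := f (X k) with hA2
    set C1 := finner (X (k+1)) (Gf (Y k)) with hC1
    set C2 := finner (X k) (Gf (Y k)) with hC2'
    set C0 := finner (Y k) (Gf (Y k)) with hC0
    set Q := frobNorm (X (k+1) - Y k) with hQ
    set D1 := frobNorm (X (k+1) - X k) with hD1
    set D0 := frobNorm (X k - X (k-1)) with hD0
    set S1 := ∑ i, (p * (sval (X k) i + ε k i) ^ (p - 1)) * sval (X (k+1)) i with hS1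
    set S0 := ∑ i, (p * (sval (X k) i + ε k i) ^ (p - 1)) * sval (X k) i with hS0
    set P1 := ∑ i, (sval (X (k+1)) i + ε (k+1) i) ^ p with hP1
    set P0 := ∑ i, (sval (X k) i + ε k i) ^ p with hP0
    -- coefficient inequalities
    have hQ0 : 0 ≤ Q := frobNorm_nonneg _
    have hD00 : 0 ≤ D0 := frobNorm_nonneg _
    have hq : Lf / 2 * Q ^ 2 ≤ β / 2 * Q ^ 2 :=
      mul_le_mul_of_nonneg_right (by linarith : Lf / 2 ≤ β / 2) (sq_nonneg Q)
    have hcoef : β / 2 * (α k * D0) ^ 2 + Lf / 2 * (α k * D0) ^ 2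
        ≤ β / 2 * D0 ^ 2 := by
      have ha1 : α k ^ 2 ≤ alphabar ^ 2 := pow_le_pow_left₀ (hα k).1 (hα k).2 2
      have key : (β + Lf) * α k ^ 2 ≤ β :=
        le_trans (mul_le_mul_of_nonneg_left ha1 (by linarith)) hcoefkey
      have hD2 : (0:ℝ) ≤ D0 ^ 2 := sq_nonneg _
      linarith only [mul_le_mul_of_nonneg_right key hD2]
    linarith only [hmk, desc1, desc2, hP, hq, hcoef]
  -- the Lyapunov function is bounded by its initial value
  set E : ℕ → ℝ := fun k => f (X k) + lam * (∑ i, (sval (X k) i + ε k i) ^ p)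
    + β / 2 * frobNorm (X k - X (k-1)) ^ 2 with hE
  have hdec' : ∀ k, E (k+1) ≤ E k := by
    intro k
    simpa only [hE, Nat.add_sub_cancel] using hdec k
  have hE0 : ∀ k, E k ≤ E 0 := by
    intro k
    induction k with
    | zero => exact le_refl _
    | succ k ih => exact (hdec' k).trans ih
  -- level-boundedness gives the bound on the iterates
  have hFk : ∀ k, f (X k) + lam * (∑ i, sval (X k) i ^ p) ≤ E 0 := by
    intro k
    have h1 : (∑ i, sval (X k) i ^ p) ≤ ∑ i, (sval (X k) i + ε k i) ^ p := by
      refine Finset.sum_le_sum fun i _ => ?_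
      refine Real.rpow_le_rpow (sval_nonneg _ _) ?_ hp0.le
      have := hε k i; linarith
    have h2 : (0:ℝ) ≤ β / 2 * frobNorm (X k - X (k-1)) ^ 2 := by positivity
    have h3 := mul_le_mul_of_nonneg_left h1 hlam.le
    calc f (X k) + lam * (∑ i, sval (X k) i ^ p) ≤ E k := by
          simp only [hE]
          linarith only [h2, h3]
      _ ≤ E 0 := hE0 k
  obtain ⟨R, hR⟩ := hlevel (E 0)
  have hRX : ∀ k, frobNorm (X k) ≤ R := fun k => hR _ (hFk k)
  have hR0 : 0 ≤ R := le_trans (frobNorm_nonneg _) (hRX 0)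
  set R' : ℝ := (1 + 2 * alphabar) * R with hR'
  have hR'0 : 0 ≤ R' := by positivity
  have hRX' : ∀ k, frobNorm (X k) ≤ R' := by
    intro k
    have h := hRX k
    rw [hR']
    linarith only [h, mul_nonneg hab0.le hR0]
  have hRY : ∀ k, frobNorm (Y k) ≤ R' := by
    intro k
    have hYb : frobNorm (Y k) ≤ frobNorm (X k) + α k * (frobNorm (X k) + frobNorm (X (k-1))) := by
      rw [hY k, frobNorm_eq]
      calc ‖X k + α k • (X k - X (k-1))‖
          ≤ ‖X k‖ + ‖α k • (X k - X (k-1))‖ := norm_add_le _ _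
        _ = ‖X k‖ + α k * ‖X k - X (k-1)‖ := by
            rw [norm_smul, Real.norm_eq_abs, abs_of_nonneg (hα k).1]
        _ ≤ ‖X k‖ + α k * (‖X k‖ + ‖X (k-1)‖) := by
            have h1 := mul_le_mul_of_nonneg_left (norm_sub_le (X k) (X (k-1))) (hα k).1
            linarith only [h1]
        _ = frobNorm (X k) + α k * (frobNorm (X k) + frobNorm (X (k-1))) := by
            rw [← frobNorm_eq, ← frobNorm_eq]
    have h1 := hRX k
    have h2 := hRX (k-1)
    have h5 := frobNorm_nonneg (X k)
    have h6 := frobNorm_nonneg (X (k-1))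
    have h7 : α k * (frobNorm (X k) + frobNorm (X (k-1))) ≤ alphabar * (2 * R) :=
      mul_le_mul (hα k).2 (by linarith only [h1, h2]) (by linarith only [h5, h6]) hab0.le
    rw [hR']
    linarith only [hYb, h7, h1]
  refine ⟨⟨R', fun k => ⟨hRX' k, hRY k⟩⟩, ?_⟩
  -- bound on the gradient along the iterates
  set Cg : ℝ := frobNorm (Gf 0) with hCg
  have hCg0 : 0 ≤ Cg := frobNorm_nonneg _
  have hGfb : ∀ k, frobNorm (Gf (Y k)) ≤ Cg + Lf * R' := by
    intro k
    have h1 := hlip (Y k) 0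
    rw [sub_zero] at h1
    have h2 : frobNorm (Gf (Y k)) ≤ frobNorm (Gf (Y k) - Gf 0) + frobNorm (Gf 0) := by
      rw [frobNorm_eq, frobNorm_eq, frobNorm_eq]
      calc ‖Gf (Y k)‖ = ‖Gf (Y k) - Gf 0 + Gf 0‖ := by rw [sub_add_cancel]
        _ ≤ ‖Gf (Y k) - Gf 0‖ + ‖Gf 0‖ := norm_add_le _ _
    have h3 := hRY k
    have h4 : Lf * frobNorm (Y k) ≤ Lf * R' := mul_le_mul_of_nonneg_left h3 hLf
    linarith only [h1, h2, h4]
  refine ⟨R' + (Cg + Lf * R') / (2 * β) + 1, ?_, ?_⟩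
  · have h : 0 ≤ (Cg + Lf * R') / (2 * β) := by positivity
    linarith only [h, hR'0]
  · intro k
    set Zk := (1 / 2 : ℝ) • (X k + Y k) - (1 / (2 * β)) • Gf (Y k) with hZk
    have h1 : sval Zk ⟨0, hm⟩ ≤ frobNorm Zk := sval_le_frobNorm _ _
    have h2 : frobNorm Zk ≤ (1/2) * (frobNorm (X k) + frobNorm (Y k))
        + (1 / (2 * β)) * frobNorm (Gf (Y k)) := by
      rw [hZk, frobNorm_eq]
      calc ‖(1 / 2 : ℝ) • (X k + Y k) - (1 / (2 * β)) • Gf (Y k)‖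
          ≤ ‖(1 / 2 : ℝ) • (X k + Y k)‖ + ‖(1 / (2 * β)) • Gf (Y k)‖ := norm_sub_le _ _
        _ = (1/2) * ‖X k + Y k‖ + (1 / (2 * β)) * ‖Gf (Y k)‖ := by
            rw [norm_smul, norm_smul, Real.norm_eq_abs, Real.norm_eq_abs,
              abs_of_nonneg (by norm_num : (0:ℝ) ≤ 1/2),
              abs_of_nonneg (by positivity : (0:ℝ) ≤ 1 / (2 * β))]
        _ ≤ (1/2) * (‖X k‖ + ‖Y k‖) + (1 / (2 * β)) * ‖Gf (Y k)‖ := by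
            have h := norm_add_le (X k) (Y k)
            linarith only [h]
        _ = (1/2) * (frobNorm (X k) + frobNorm (Y k))
            + (1 / (2 * β)) * frobNorm (Gf (Y k)) := by
            rw [← frobNorm_eq, ← frobNorm_eq, ← frobNorm_eq]
    have h3 := hRX' k
    have h4 := hRY k
    have h5 := hGfb k
    have h6 : (1 / (2 * β)) * frobNorm (Gf (Y k)) ≤ (Cg + Lf * R') / (2 * β) := by
      rw [div_eq_mul_one_div (Cg + Lf * R') (2 * β), mul_comm (Cg + Lf * R') (1 / (2 * β))]
      refine mul_le_mul_of_nonneg_left h5 (by positivity)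
    linarith only [h1, h2, h3, h4, h6]
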